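/- For a fixed sum value k̃ > 0, the integral over λ ∈ (0,∞)^N with Σλᵢ = k̃ (with respect to the (N-1)-dimensional Lebesgue measure on this simplex slice) of ∏_{i<j}(λᵢ-λⱼ)² equals (k̃^{N²-1}/Γ(N²)) · ∏_{j=1}^N Γ(j+1)Γ(j)/Γ(2). -/

import Mathlib

open MeasureTheory Finset intervalIntegral

lemma betaNat (a b : ℕ) :
    ∫ x in (0:ℝ)..1, x ^ a * (1 - x) ^ b
      = (a.factorial * b.factorial : ℝ) / (a + b + 1).factorial := by
  induction b generalizing a with
  | zero =>
    have h : (a.factorial:ℝ) ≠ 0 := Nat.cast_ne_zero.mpr a.factorial_ne_zero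
    simp [integral_pow, Nat.factorial]
    field_simp
  | succ b ih =>
    have hu : ∀ x ∈ Set.uIcc (0:ℝ) 1, HasDerivAt (fun x : ℝ => (1 - x) ^ (b + 1))
        (-((b+1 : ℝ) * (1 - x) ^ b)) x := by
      intro x _
      have h1 : HasDerivAt (fun x : ℝ => 1 - x) (-1) x := by
        simpa using (hasDerivAt_id x).const_sub 1
      have := h1.pow (b+1)
      have e : ((b+1:ℕ):ℝ) * (1 - x) ^ (b + 1 - 1) * -1 = -((b+1 : ℝ) * (1 - x) ^ b) := by
        rw [Nat.add_sub_cancel]; push_cast; ring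
      rw [e] at this
      exact this
    have hv : ∀ x ∈ Set.uIcc (0:ℝ) 1, HasDerivAt (fun x : ℝ => x ^ (a+1) / (a+1))
        (x ^ a) x := by
      intro x _
      have := (hasDerivAt_pow (a+1) x).div_const (a+1 : ℝ)
      exact this.congr_deriv (by rw [Nat.add_sub_cancel]; push_cast; field_simp)
    have key := intervalIntegral.integral_mul_deriv_eq_deriv_mul hu hv
      (by apply Continuous.intervalIntegrable; continuity)
      (by apply Continuous.intervalIntegrable; continuity)
    have e1 : (∫ x in (0:ℝ)..1, x ^ a * (1 - x) ^ (b+1))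
        = (b+1 : ℝ) / (a+1) * ∫ x in (0:ℝ)..1, x ^ (a+1) * (1 - x) ^ b := by
      have comm : (∫ x in (0:ℝ)..1, x ^ a * (1 - x) ^ (b+1))
          = ∫ x in (0:ℝ)..1, (1 - x) ^ (b+1) * x ^ a := by
        simp only [mul_comm]
      rw [comm, key]
      have h2 : ∀ x:ℝ, -((b+1:ℝ)*(1-x)^b) * (x^(a+1)/(a+1))
          = -((b+1:ℝ)/(a+1) * (x^(a+1)*(1-x)^b)) := fun x => by ring
      simp only [h2, intervalIntegral.integral_neg, intervalIntegral.integral_const_mul]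
      norm_num
    rw [e1, ih (a+1), show a+1+b+1 = a+(b+1)+1 by ring]
    have h1 : ((a+(b+1)+1).factorial : ℝ) ≠ 0 := Nat.cast_ne_zero.mpr (Nat.factorial_ne_zero _)
    have h2 : (a:ℝ) + 1 ≠ 0 := by positivity
    push_cast [Nat.factorial_succ]
    field_simp

lemma betaNatScaled (a b : ℕ) {k : ℝ} (hk : 0 < k) :
    ∫ x in (0:ℝ)..k, x ^ a * (k - x) ^ b
      = k ^ (a + b + 1) * ((a.factorial * b.factorial : ℝ) / (a + b + 1).factorial) := by
  have := intervalIntegral.smul_integral_comp_mul_left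
    (fun x : ℝ => x ^ a * (k - x) ^ b) k (a := 0) (b := 1)
  simp only [mul_zero, mul_one, smul_eq_mul] at this
  rw [← this, ← betaNat a b, ← intervalIntegral.integral_const_mul]
  have h2 : ∀ x:ℝ, k * ((k*x)^a * (k - k*x)^b) = k^(a+b+1) * (x^a * (1-x)^b) := by
    intro x
    rw [show k - k*x = k*(1-x) by ring, mul_pow, mul_pow, pow_add, pow_add]
    ring
  rw [← intervalIntegral.integral_const_mul]
  simp only [h2]


def Sset (n : ℕ) (k : ℝ) : Set (Fin n → ℝ) := {l | (∀ i, 0 < l i) ∧ ∑ i, l i < k}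

lemma measurableSet_Sset (n : ℕ) (k : ℝ) : MeasurableSet (Sset n k) := by
  have h1 : MeasurableSet {l : Fin n → ℝ | ∀ i, 0 < l i} := by
    have : {l : Fin n → ℝ | ∀ i, 0 < l i} = Set.pi Set.univ (fun _ => Set.Ioi 0) := by
      ext l; simp [Set.mem_pi]
    rw [this]; exact MeasurableSet.univ_pi fun _ => measurableSet_Ioi
  have h2 : MeasurableSet {l : Fin n → ℝ | ∑ i, l i < k} :=
    measurableSet_lt (by measurability) measurable_const
  exact h1.inter h2

lemma Sset_subset (n : ℕ) (k : ℝ) :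
    Sset n k ⊆ Set.pi Set.univ (fun _ : Fin n => Set.Ioc 0 k) := by
  rintro l ⟨h1, h2⟩ i _
  exact ⟨h1 i, le_trans (Finset.single_le_sum (fun j _ => (h1 j).le) (Finset.mem_univ i)) h2.le⟩

lemma volume_Sset_ne_top (n : ℕ) (k : ℝ) : volume (Sset n k) ≠ ⊤ := by
  refine ne_top_of_le_ne_top ?_ (measure_mono (Sset_subset n k))
  rw [volume_pi_pi]
  simp only [Real.volume_Ioc, sub_zero, Finset.prod_const, Finset.card_univ, Fintype.card_fin]
  exact ENNReal.pow_ne_top ENNReal.ofReal_ne_top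

lemma Sset_coord (m : ℕ) (k : ℝ) {l : Fin m → ℝ} (hl : l ∈ Sset m k) (i : Fin (m+1)) :
    0 ≤ (Fin.snoc l (k - ∑ j, l j) : Fin (m+1) → ℝ) i ∧
      (Fin.snoc l (k - ∑ j, l j) : Fin (m+1) → ℝ) i ≤ k := by
  refine Fin.lastCases ?_ ?_ i
  · rw [Fin.snoc_last]
    have h0 : (0:ℝ) ≤ ∑ j, l j := Finset.sum_nonneg fun j _ => (hl.1 j).le
    exact ⟨by linarith [hl.2], by linarith⟩
  · intro j
    rw [Fin.snoc_castSucc]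
    have hle : l j ≤ ∑ i, l i := Finset.single_le_sum (f := l) (fun i _ => (hl.1 i).le)
      (Finset.mem_univ j)
    exact ⟨(hl.1 j).le, by linarith [hl.2]⟩

lemma continuous_dirichlet_integrand (m : ℕ) (k : ℝ) (a : Fin (m+1) → ℕ) :
    Continuous (fun l : Fin m → ℝ =>
      ∏ i, (Fin.snoc l (k - ∑ j, l j) : Fin (m+1) → ℝ) i ^ a i) := by
  apply continuous_finset_prod
  intro i _
  apply Continuous.pow
  refine Fin.lastCases ?_ ?_ i
  · simp only [Fin.snoc_last]
    exact continuous_const.sub (continuous_finset_sum _ fun j _ => continuous_apply j)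
  · intro j
    simp only [Fin.snoc_castSucc]
    exact continuous_apply j


lemma dirichlet_bound (m : ℕ) (k : ℝ) (a : Fin (m+1) → ℕ) {l : Fin m → ℝ}
    (hl : l ∈ Sset m k) :
    ‖∏ i, (Fin.snoc l (k - ∑ j, l j) : Fin (m+1) → ℝ) i ^ a i‖ ≤ k ^ (∑ i, a i) := by
  have h1 : ∀ i, (0:ℝ) ≤ (Fin.snoc l (k - ∑ j, l j) : Fin (m+1) → ℝ) i ^ a i :=
    fun i => pow_nonneg (Sset_coord m k hl i).1 _
  rw [Real.norm_eq_abs, abs_of_nonneg (Finset.prod_nonneg fun i _ => h1 i)]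
  calc ∏ i, (Fin.snoc l (k - ∑ j, l j) : Fin (m+1) → ℝ) i ^ a i
      ≤ ∏ i, k ^ a i := Finset.prod_le_prod (fun i _ => h1 i)
        (fun i _ => pow_le_pow_left₀ (Sset_coord m k hl i).1 (Sset_coord m k hl i).2 _)
    _ = k ^ (∑ i, a i) := by rw [Finset.prod_pow_eq_pow_sum]

lemma dirichlet_integrableOn (m : ℕ) {k : ℝ} (hk : 0 < k) (a : Fin (m+1) → ℕ) :
    IntegrableOn (fun l : Fin m → ℝ =>
      ∏ i, (Fin.snoc l (k - ∑ j, l j) : Fin (m+1) → ℝ) i ^ a i) (Sset m k) := by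
  apply Measure.integrableOn_of_bounded (volume_Sset_ne_top m k)
    (continuous_dirichlet_integrand m k a).aestronglyMeasurable (M := k ^ (∑ i, a i))
  rw [ae_restrict_iff' (measurableSet_Sset m k)]
  exact ae_of_all _ fun l hl => dirichlet_bound m k a hl

lemma Sset_zero (k : ℝ) (hk : 0 < k) : Sset 0 k = Set.univ := by
  ext l
  simp [Sset, hk]

set_option maxHeartbeats 1000000 in
lemma dirichlet (n : ℕ) : ∀ (k : ℝ), 0 < k → ∀ (a : Fin (n+1) → ℕ),
    (∫ l in Sset n k, ∏ i, (Fin.snoc l (k - ∑ j, l j) : Fin (n+1) → ℝ) i ^ a i)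
      = k ^ (n + ∑ i, a i) *
        ((∏ i, ((a i).factorial : ℝ)) / (n + ∑ i, a i).factorial) := by
  induction n with
  | zero =>
    intro k hk a
    rw [Sset_zero k hk, Measure.restrict_univ]
    rw [MeasureTheory.integral_unique]
    have h1 : (volume (Set.univ : Set (Fin 0 → ℝ))).toReal = 1 := by
      simp [MeasureTheory.volume_pi, Measure.pi_univ]
    rw [measureReal_def, h1, one_smul]
    simp only [Finset.univ_eq_empty, Finset.sum_empty, sub_zero, Fin.prod_univ_succ,
      Fin.sum_univ_succ, Finset.prod_empty, mul_one, add_zero, Nat.zero_add]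
    rw [show (0 : Fin (0+1)) = Fin.last 0 from rfl, Fin.snoc_last,
      div_self (by exact_mod_cast (a (Fin.last 0)).factorial_ne_zero), mul_one]
  | succ n ih =>
    intro k hk a
    set F : (Fin (n+1) → ℝ) → ℝ := fun l =>
      ∏ i, (Fin.snoc l (k - ∑ j, l j) : Fin (n+2) → ℝ) i ^ a i with hF
    set C : ℝ := (∏ i, ((Fin.tail a i).factorial : ℝ)) / (n + ∑ i, Fin.tail a i).factorial
      with hC
    set E : ℕ := n + ∑ i, Fin.tail a i with hE
    let e := MeasurableEquiv.piFinSuccAbove (fun _ : Fin (n+1) => ℝ) 0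
    have mp : MeasurePreserving e.symm := (volume_preserving_piFinSuccAbove (fun _ : Fin (n+1) => ℝ) 0).symm
    have esymm : ∀ z : ℝ × (Fin n → ℝ), e.symm z = Fin.cons z.1 z.2 := by
      intro z
      show (MeasurableEquiv.piFinSuccAbove (fun _ : Fin (n+1) => ℝ) 0).symm z = _
      rw [MeasurableEquiv.piFinSuccAbove_symm_apply]
      exact Fin.insertNth_zero' z.1 z.2
    set T : Set (ℝ × (Fin n → ℝ)) := e.symm ⁻¹' (Sset (n+1) k) with hTdef
    have hT : MeasurableSet T := (measurableSet_Sset (n+1) k).preimage e.symm.measurable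
    have hTmem : ∀ (x : ℝ) (y : Fin n → ℝ), (x, y) ∈ T ↔ 0 < x ∧ y ∈ Sset n (k - x) := by
      intro x y
      show e.symm (x, y) ∈ Sset (n+1) k ↔ _
      rw [esymm]
      simp only [Sset, Set.mem_setOf_eq, Fin.sum_cons, Fin.forall_fin_succ, Fin.cons_zero,
        Fin.cons_succ]
      constructor
      · rintro ⟨⟨h1, h2⟩, h3⟩
        exact ⟨h1, h2, by linarith⟩
      · rintro ⟨h1, h2, h3⟩
        exact ⟨⟨h1, h2⟩, by linarith⟩
    have key1 : (∫ l in Sset (n+1) k, F l) = ∫ z in T, F (e.symm z) :=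
      (mp.setIntegral_preimage_emb e.symm.measurableEmbedding F _).symm
    have hIF : IntegrableOn F (Sset (n+1) k) := dirichlet_integrableOn (n+1) hk a
    have hGeq : (fun z : ℝ × (Fin n → ℝ) => F (e.symm z))
        = fun z : ℝ × (Fin n → ℝ) => F (Fin.cons z.1 z.2) := funext fun z => by rw [esymm]
    have hGcont : Continuous (fun z : ℝ × (Fin n → ℝ) => F (Fin.cons z.1 z.2)) := by
      apply (continuous_dirichlet_integrand (n+1) k a).comp
      apply continuous_pi
      intro i
      refine Fin.cases ?_ ?_ i
      · simpa using continuous_fst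
      · intro j
        simp only [Fin.cons_succ]; exact (continuous_apply j).comp continuous_snd
    have hTsub : T ⊆ Set.Ioc 0 k ×ˢ Set.pi Set.univ (fun _ : Fin n => Set.Ioc 0 k) := by
      rintro ⟨x, y⟩ hz
      rcases (hTmem x y).1 hz with ⟨hx, hy⟩
      have h0 : (0:ℝ) ≤ ∑ i, y i := Finset.sum_nonneg fun i _ => (hy.1 i).le
      have h2 := hy.2
      refine ⟨⟨hx, by linarith⟩, fun i _ => ⟨hy.1 i, ?_⟩⟩
      have hle : y i ≤ ∑ j, y j := Finset.single_le_sum (f := y)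
        (fun j _ => (hy.1 j).le) (Finset.mem_univ i)
      linarith
    have hTfin : ((volume : Measure ℝ).prod (volume : Measure (Fin n → ℝ))) T ≠ ⊤ := by
      refine ne_top_of_le_ne_top ?_ (measure_mono hTsub)
      rw [Measure.prod_prod, volume_pi_pi]
      simp only [Real.volume_Ioc, sub_zero, Finset.prod_const, Finset.card_univ,
        Fintype.card_fin]
      exact ENNReal.mul_ne_top ENNReal.ofReal_ne_top
        (ENNReal.pow_ne_top ENNReal.ofReal_ne_top)
    have hIG : Integrable (T.indicator (fun z => F (e.symm z)))
        ((volume : Measure ℝ).prod (volume : Measure (Fin n → ℝ))) := by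
      rw [integrable_indicator_iff hT, hGeq]
      apply Measure.integrableOn_of_bounded hTfin hGcont.aestronglyMeasurable
        (M := k ^ (∑ i, a i))
      rw [ae_restrict_iff' hT]
      refine ae_of_all _ ?_
      rintro ⟨x, y⟩ hz
      have hmem : Fin.cons x y ∈ Sset (n+1) k := by rw [← esymm (x, y)]; exact hz
      exact dirichlet_bound (n+1) k a hmem
    rw [key1, ← MeasureTheory.integral_indicator hT, Measure.volume_eq_prod,
      MeasureTheory.integral_prod _ (hGeq ▸ hIG)]
    have inner : ∀ x : ℝ, (∫ y, T.indicator (fun z => F (e.symm z)) (x, y))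
        = Set.indicator (Set.Ioo 0 k) (fun x => x ^ a 0 * ((k - x) ^ E * C)) x := by
      intro x
      by_cases hx : x ∈ Set.Ioo 0 k
      · rw [Set.indicator_of_mem hx]
        have hxk : 0 < k - x := sub_pos.2 hx.2
        have sec : (fun y => T.indicator (fun z => F (e.symm z)) (x, y))
            = (Sset n (k-x)).indicator (fun y => F (e.symm (x, y))) := by
          funext y
          by_cases hy : y ∈ Sset n (k - x)
          · rw [Set.indicator_of_mem hy, Set.indicator_of_mem ((hTmem x y).2 ⟨hx.1, hy⟩)]
          · rw [Set.indicator_of_notMem hy, Set.indicator_of_notMem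
              (fun hc => hy ((hTmem x y).1 hc).2)]
        rw [sec, MeasureTheory.integral_indicator (measurableSet_Sset n (k-x))]
        have Feq : ∀ y ∈ Sset n (k - x), F (e.symm (x, y))
            = x ^ a 0 * ∏ i, (Fin.snoc y ((k - x) - ∑ j, y j) : Fin (n+1) → ℝ) i ^ Fin.tail a i := by
          intro y _
          rw [esymm]
          show ∏ i, (Fin.snoc (Fin.cons x y) (k - ∑ j, (Fin.cons x y : Fin (n+1) → ℝ) j) : Fin (n+2) → ℝ) i ^ a i = _
          rw [Fin.sum_cons, ← Fin.cons_snoc_eq_snoc_cons,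
            show k - (x + ∑ j, y j) = (k - x) - ∑ j, y j by ring, Fin.prod_univ_succ]
          simp only [Fin.cons_zero, Fin.cons_succ]
          rfl
        rw [setIntegral_congr_fun (measurableSet_Sset n (k-x)) Feq,
          MeasureTheory.integral_const_mul, ih (k - x) hxk (Fin.tail a)]
      · rw [Set.indicator_of_notMem hx]
        have hnot : ∀ y : Fin n → ℝ, (x, y) ∉ T := by
          intro y hc
          rcases (hTmem x y).1 hc with ⟨hx1, hy⟩
          apply hx
          refine ⟨hx1, ?_⟩
          by_contra hxk
          push_neg at hxk
          have h0 : (0:ℝ) ≤ ∑ i, y i := Finset.sum_nonneg fun i _ => (hy.1 i).le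
          have := hy.2
          linarith
        have hzero : (fun y => T.indicator (fun z => F (e.symm z)) (x, y)) = fun _ => (0:ℝ) :=
          funext fun y => Set.indicator_of_notMem (hnot y) _
        rw [hzero, MeasureTheory.integral_zero]
    rw [integral_congr_ae (ae_of_all _ inner), MeasureTheory.integral_indicator measurableSet_Ioo,
      ← integral_Ioc_eq_integral_Ioo, ← intervalIntegral.integral_of_le hk.le]
    have hflip : ∀ x : ℝ, x ^ a 0 * ((k - x) ^ E * C) = C * (x ^ a 0 * (k - x) ^ E) :=
      fun x => by ring
    simp only [hflip]
    rw [intervalIntegral.integral_const_mul, betaNatScaled (a 0) E hk]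
    -- final arithmetic
    have hsum : ∑ i, a i = a 0 + ∑ i, Fin.tail a i := Fin.sum_univ_succ a
    have hprod : (∏ i, ((a i).factorial : ℝ)) = (a 0).factorial * ∏ i, ((Fin.tail a i).factorial : ℝ) := by
      rw [Fin.prod_univ_succ]; rfl
    have hexp : a 0 + E + 1 = (n + 1) + ∑ i, a i := by rw [hE, hsum]; ring
    have hE0 : ((E.factorial : ℝ)) ≠ 0 := Nat.cast_ne_zero.mpr E.factorial_ne_zero
    have hden : (((n + 1) + ∑ i, a i).factorial : ℝ) ≠ 0 :=
      Nat.cast_ne_zero.mpr (Nat.factorial_ne_zero _)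
    rw [hexp, hC, hprod]
    field_simp


lemma choose_dot {N i j : ℕ} (hj : j < N) :
    ∑ k ∈ Finset.range N, i.choose k * j.choose k = (i+j).choose i := by
  have h1 := Nat.add_choose_eq i j j
  rw [Finset.Nat.sum_antidiagonal_eq_sum_range_succ_mk] at h1
  have h2 : ∀ k ∈ Finset.range (j+1), i.choose k * j.choose (j-k) = i.choose k * j.choose k := by
    intro k hk
    rw [Nat.choose_symm (Nat.lt_succ_iff.1 (Finset.mem_range.1 hk))]
  rw [Finset.sum_congr rfl h2] at h1
  rw [← Finset.sum_subset (Finset.range_subset_range.2 hj)]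
  · rw [← h1, Nat.choose_symm_add]
  · intro k _ hk
    have : j < k := by simpa [Nat.lt_succ_iff] using fun h => hk (Finset.mem_range.2 (Nat.lt_succ_of_le h))
    rw [Nat.choose_eq_zero_of_lt this, mul_zero]

lemma det_hankel (N : ℕ) :
    (Matrix.of fun i j : Fin N => ((((i:ℕ)+(j:ℕ)).factorial : ℝ))).det
      = (∏ i : Fin N, (((i:ℕ).factorial : ℝ)))^2 := by
  set L : Matrix (Fin N) (Fin N) ℝ := Matrix.of fun i k => (((i:ℕ).choose (k:ℕ) : ℝ)) with hL
  have hLdet : L.det = 1 := by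
    have htri : L.BlockTriangular OrderDual.toDual := by
      intro i j hij
      have : (i:ℕ) < (j:ℕ) := hij
      simp only [hL, Matrix.of_apply]
      exact_mod_cast congrArg (Nat.cast (R := ℝ)) (Nat.choose_eq_zero_of_lt this)
    rw [Matrix.det_of_lowerTriangular L htri]
    simp [hL, Nat.choose_self]
  have hM : (Matrix.of fun i j : Fin N => ((((i:ℕ)+(j:ℕ)).factorial : ℝ)))
      = Matrix.diagonal (fun i : Fin N => (((i:ℕ).factorial : ℝ))) * (L * L.transpose) *
        Matrix.diagonal (fun i : Fin N => (((i:ℕ).factorial : ℝ))) := by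
    ext i j
    rw [Matrix.mul_diagonal, Matrix.diagonal_mul, Matrix.mul_apply]
    have hdot : ∑ k : Fin N, L i k * L.transpose k j = (((i:ℕ)+(j:ℕ)).choose (i:ℕ) : ℝ) := by
      have : ∀ k : Fin N, L i k * L.transpose k j = (((i:ℕ).choose (k:ℕ) * (j:ℕ).choose (k:ℕ) : ℕ) : ℝ) := by
        intro k; simp [hL, Matrix.transpose_apply]
      rw [Finset.sum_congr rfl fun k _ => this k, ← Nat.cast_sum]
      rw [Fin.sum_univ_eq_sum_range (fun k => (i:ℕ).choose k * (j:ℕ).choose k) N]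
      exact_mod_cast congrArg (Nat.cast (R := ℝ)) (choose_dot j.isLt)
    rw [hdot, Matrix.of_apply]
    rw [← Nat.choose_mul_factorial_mul_factorial (Nat.le_add_right (i:ℕ) (j:ℕ))]
    push_cast
    have : (i:ℕ) + (j:ℕ) - (i:ℕ) = (j:ℕ) := by omega
    rw [this]
    push_cast
    ring
  rw [hM, Matrix.det_mul, Matrix.det_mul, Matrix.det_diagonal, Matrix.det_mul,
    Matrix.det_transpose, hLdet]
  ring

lemma hankel_sum (N : ℕ) :
    ∑ σ : Equiv.Perm (Fin N), ∑ τ : Equiv.Perm (Fin N),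
      ((Equiv.Perm.sign σ : ℤ) : ℝ) * ((Equiv.Perm.sign τ : ℤ) : ℝ)
        * ∏ j : Fin N, ((((σ⁻¹ j : Fin N) : ℕ) + ((τ⁻¹ j : Fin N) : ℕ)).factorial : ℝ)
    = (N.factorial : ℝ) * (∏ i : Fin N, (((i:ℕ).factorial : ℝ)))^2 := by
  set F : Equiv.Perm (Fin N) → Equiv.Perm (Fin N) → ℝ := fun σ τ =>
    ((Equiv.Perm.sign σ : ℤ) : ℝ) * ((Equiv.Perm.sign τ : ℤ) : ℝ)
      * ∏ j : Fin N, ((((σ j : Fin N) : ℕ) + ((τ j : Fin N) : ℕ)).factorial : ℝ) with hFdef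
  have step1 : (∑ σ : Equiv.Perm (Fin N), ∑ τ : Equiv.Perm (Fin N),
      ((Equiv.Perm.sign σ : ℤ) : ℝ) * ((Equiv.Perm.sign τ : ℤ) : ℝ)
        * ∏ j : Fin N, ((((σ⁻¹ j : Fin N) : ℕ) + ((τ⁻¹ j : Fin N) : ℕ)).factorial : ℝ))
      = ∑ σ : Equiv.Perm (Fin N), ∑ τ : Equiv.Perm (Fin N), F σ τ := by
    calc (∑ σ : Equiv.Perm (Fin N), ∑ τ : Equiv.Perm (Fin N),
        ((Equiv.Perm.sign σ : ℤ) : ℝ) * ((Equiv.Perm.sign τ : ℤ) : ℝ)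
          * ∏ j : Fin N, ((((σ⁻¹ j : Fin N) : ℕ) + ((τ⁻¹ j : Fin N) : ℕ)).factorial : ℝ))
        = ∑ σ : Equiv.Perm (Fin N), ∑ τ : Equiv.Perm (Fin N), F σ⁻¹ τ⁻¹ := by
          refine Finset.sum_congr rfl fun σ _ => Finset.sum_congr rfl fun τ _ => ?_
          simp [hFdef, Equiv.Perm.sign_inv]
      _ = ∑ σ : Equiv.Perm (Fin N), ∑ τ : Equiv.Perm (Fin N), F σ⁻¹ τ :=
          Finset.sum_congr rfl fun σ _ => Equiv.sum_comp (Equiv.inv (Equiv.Perm (Fin N))) (F σ⁻¹)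
      _ = ∑ σ : Equiv.Perm (Fin N), ∑ τ : Equiv.Perm (Fin N), F σ τ :=
          Equiv.sum_comp (Equiv.inv (Equiv.Perm (Fin N))) (fun σ => ∑ τ, F σ τ)
  set D : ℝ := ∑ ρ : Equiv.Perm (Fin N),
    ((Equiv.Perm.sign ρ : ℤ) : ℝ) * ∏ i : Fin N, ((((i : ℕ) + (ρ i : ℕ)).factorial : ℝ))
    with hDdef
  have step2 : ∀ σ : Equiv.Perm (Fin N), (∑ τ : Equiv.Perm (Fin N), F σ τ) = D := by
    intro σ
    rw [← Equiv.sum_comp (Equiv.mulRight σ) (F σ), hDdef]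
    refine Finset.sum_congr rfl fun ρ _ => ?_
    have hsgn : ((Equiv.Perm.sign σ : ℤ) : ℝ) * ((Equiv.Perm.sign (ρ * σ) : ℤ) : ℝ)
        = ((Equiv.Perm.sign ρ : ℤ) : ℝ) := by
      rw [Equiv.Perm.sign_mul]
      have h2 : ((Equiv.Perm.sign σ : ℤ) : ℝ) * ((Equiv.Perm.sign σ : ℤ) : ℝ) = 1 := by
        rcases Int.units_eq_one_or (Equiv.Perm.sign σ) with h | h <;> rw [h] <;> norm_num
      rw [Units.val_mul, Int.cast_mul, mul_comm ((Equiv.Perm.sign ρ : ℤ) : ℝ) _,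
        ← mul_assoc, h2, one_mul]
    have hprod : (∏ j : Fin N, ((((σ j : Fin N) : ℕ) + (((ρ * σ) j : Fin N) : ℕ)).factorial : ℝ))
        = ∏ i : Fin N, ((((i : ℕ) + (ρ i : ℕ)).factorial : ℝ)) := by
      rw [← Equiv.prod_comp σ (fun i => ((((i : ℕ) + (ρ i : ℕ)).factorial : ℝ)))]
      exact Finset.prod_congr rfl fun j _ => by simp [Equiv.Perm.mul_apply]
    have hmr : (Equiv.mulRight σ) ρ = ρ * σ := rfl
    rw [hmr, hFdef]
    simp only []
    rw [hsgn, hprod]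
  have step3 : D = (∏ i : Fin N, (((i:ℕ).factorial : ℝ)))^2 := by
    rw [← det_hankel N, Matrix.det_apply', hDdef]
    refine Finset.sum_congr rfl fun ρ _ => ?_
    congr 1
    refine Finset.prod_congr rfl fun i _ => ?_
    rw [Matrix.of_apply, Nat.add_comm]
  rw [step1, Finset.sum_congr rfl fun σ _ => step2 σ, Finset.sum_const, Finset.card_univ,
    Fintype.card_perm, Fintype.card_fin, nsmul_eq_mul, step3]

lemma prod_pairs (N : ℕ) (f : Fin N × Fin N → ℝ) :
    ∏ p ∈ Finset.univ.filter (fun p : Fin N × Fin N => p.1 < p.2), f p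
      = ∏ i : Fin N, ∏ j ∈ Finset.Ioi i, f (i, j) := by
  rw [Finset.prod_sigma' Finset.univ (fun i => Finset.Ioi i) (fun i j => f (i, j))]
  refine (Finset.prod_bij (fun (x : Σ _ : Fin N, Fin N) _ => (x.1, x.2)) ?_ ?_ ?_ ?_).symm
  · intro x hx
    simp only [Finset.mem_sigma, Finset.mem_Ioi] at hx
    simp [hx.2]
  · rintro ⟨a1, a2⟩ h1 ⟨b1, b2⟩ h2 h
    simp only [Prod.mk.injEq] at h
    simp [h.1, h.2]
  · intro p hp
    simp only [Finset.mem_filter] at hp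
    exact ⟨⟨p.1, p.2⟩, by simp [Finset.mem_sigma, Finset.mem_Ioi, hp.2], rfl⟩
  · intros; rfl

lemma vandermonde_sq (N : ℕ) (v : Fin N → ℝ) :
    ∏ p ∈ Finset.univ.filter (fun p : Fin N × Fin N => p.1 < p.2), (v p.1 - v p.2)^2
      = ∑ σ : Equiv.Perm (Fin N), ∑ τ : Equiv.Perm (Fin N),
          ((Equiv.Perm.sign σ : ℤ) : ℝ) * ((Equiv.Perm.sign τ : ℤ) : ℝ)
            * ∏ j, v j ^ (((σ⁻¹ j : Fin N) : ℕ) + ((τ⁻¹ j : Fin N) : ℕ)) := by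
  rw [prod_pairs N (fun p => (v p.1 - v p.2)^2)]
  have h1 : ∏ i : Fin N, ∏ j ∈ Finset.Ioi i, (v i - v j)^2
      = (∏ i : Fin N, ∏ j ∈ Finset.Ioi i, (v j - v i))^2 := by
    rw [← Finset.prod_pow]
    refine Finset.prod_congr rfl fun i _ => ?_
    rw [← Finset.prod_pow]
    exact Finset.prod_congr rfl fun j _ => by ring
  have hdet : (Matrix.vandermonde v).det
      = ∑ σ : Equiv.Perm (Fin N), ((Equiv.Perm.sign σ : ℤ) : ℝ)
          * ∏ j : Fin N, v j ^ (((σ⁻¹ j : Fin N) : ℕ)) := by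
    rw [Matrix.det_apply']
    refine Finset.sum_congr rfl fun σ _ => ?_
    congr 1
    rw [← Equiv.prod_comp σ (fun j => v j ^ (((σ⁻¹ j : Fin N) : ℕ)))]
    exact Finset.prod_congr rfl fun i _ => by
      simp [Matrix.vandermonde_apply]
  have h2 : ∏ i : Fin N, ∏ j ∈ Finset.Ioi i, (v j - v i) = (Matrix.vandermonde v).det :=
    (Matrix.det_vandermonde v).symm
  rw [h1, h2, hdet, sq, Finset.sum_mul_sum]
  refine Finset.sum_congr rfl fun σ _ => Finset.sum_congr rfl fun τ _ => ?_
  rw [mul_mul_mul_comm, ← Finset.prod_mul_distrib]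
  congr 1
  exact Finset.prod_congr rfl fun j _ => by rw [← pow_add]

lemma prod_Icc_fact (N : ℕ) :
    ∏ j ∈ Finset.Icc 1 N, (j.factorial * (j-1).factorial)
      = N.factorial * (∏ i ∈ Finset.range N, i.factorial)^2 := by
  induction N with
  | zero => simp
  | succ N ih =>
    rw [Finset.prod_Icc_succ_top (Nat.succ_le_succ (Nat.zero_le N)), ih, Finset.prod_range_succ]
    simp only [Nat.succ_sub_one]
    ring

lemma gamma_prod (N : ℕ) :
    (∏ j ∈ Finset.Icc 1 N, Real.Gamma (j + 1) * Real.Gamma j / Real.Gamma 2)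
      = (N.factorial : ℝ) * (∏ i : Fin N, (((i:ℕ).factorial : ℝ)))^2 := by
  have h1 : ∀ j ∈ Finset.Icc 1 N, Real.Gamma ((j:ℝ) + 1) * Real.Gamma (j:ℝ) / Real.Gamma 2
      = ((j.factorial * (j-1).factorial : ℕ) : ℝ) := by
    intro j hj
    have hj1 : 1 ≤ j := (Finset.mem_Icc.1 hj).1
    rw [Real.Gamma_two, div_one, Real.Gamma_nat_eq_factorial j,
      show (j:ℝ) = ((j-1:ℕ):ℝ) + 1 by rw [Nat.cast_sub hj1]; push_cast; ring,
      Real.Gamma_nat_eq_factorial (j-1)]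
    push_cast
    ring
  rw [Finset.prod_congr rfl h1, ← Nat.cast_prod, prod_Icc_fact N]
  rw [Fin.prod_univ_eq_prod_range (fun i => ((i.factorial : ℝ))) N]
  push_cast
  ring


/-- Selberg-type integral over the simplex slice `{λ ∈ (0,∞)^N : ∑ λᵢ = k̃}`,
realized (equivalently to the induced delta-constraint measure) by integrating over the
first `N - 1` coordinates with the last coordinate determined by the sum constraint:
`∫ ∏_{i<j}(λᵢ-λⱼ)² = (k̃^{N²-1}/Γ(N²)) ⬝ ∏_{j=1}^N Γ(j+1)Γ(j)/Γ(2)`, where `N = n+1 ≥ 1`. -/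
theorem vandermonde_simplex_slice_integral (n : ℕ) (ktil : ℝ) (hk : 0 < ktil) :
    (∫ l in {l : Fin n → ℝ | (∀ i, 0 < l i) ∧ ∑ i, l i < ktil},
        ∏ p ∈ Finset.univ.filter (fun p : Fin (n + 1) × Fin (n + 1) => p.1 < p.2),
          ((Fin.snoc l (ktil - ∑ i, l i) : Fin (n + 1) → ℝ) p.1 -
            (Fin.snoc l (ktil - ∑ i, l i) : Fin (n + 1) → ℝ) p.2) ^ 2)
      = ktil ^ ((n + 1) ^ 2 - 1) / Real.Gamma (((n + 1) ^ 2 : ℕ)) *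
          ∏ j ∈ Finset.Icc 1 (n + 1),
            Real.Gamma (j + 1) * Real.Gamma j / Real.Gamma 2 := by
  have hset : {l : Fin n → ℝ | (∀ i, 0 < l i) ∧ ∑ i, l i < ktil} = Sset n ktil := rfl
  rw [hset]
  have hpt : ∀ l : Fin n → ℝ,
      (∏ p ∈ Finset.univ.filter (fun p : Fin (n + 1) × Fin (n + 1) => p.1 < p.2),
        ((Fin.snoc l (ktil - ∑ i, l i) : Fin (n + 1) → ℝ) p.1 -
          (Fin.snoc l (ktil - ∑ i, l i) : Fin (n + 1) → ℝ) p.2) ^ 2)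
      = ∑ σ : Equiv.Perm (Fin (n+1)), ∑ τ : Equiv.Perm (Fin (n+1)),
          ((Equiv.Perm.sign σ : ℤ) : ℝ) * ((Equiv.Perm.sign τ : ℤ) : ℝ)
            * ∏ j, (Fin.snoc l (ktil - ∑ i, l i) : Fin (n + 1) → ℝ) j
                ^ (((σ⁻¹ j : Fin (n+1)) : ℕ) + ((τ⁻¹ j : Fin (n+1)) : ℕ)) :=
    fun l => vandermonde_sq (n+1) _
  simp only [hpt]
  have hint : ∀ (σ τ : Equiv.Perm (Fin (n+1))), IntegrableOn (fun l : Fin n → ℝ =>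
      ((Equiv.Perm.sign σ : ℤ) : ℝ) * ((Equiv.Perm.sign τ : ℤ) : ℝ)
        * ∏ j, (Fin.snoc l (ktil - ∑ i, l i) : Fin (n + 1) → ℝ) j
            ^ (((σ⁻¹ j : Fin (n+1)) : ℕ) + ((τ⁻¹ j : Fin (n+1)) : ℕ))) (Sset n ktil) :=
    fun σ τ => (dirichlet_integrableOn n hk
      (fun j => ((σ⁻¹ j : Fin (n+1)) : ℕ) + ((τ⁻¹ j : Fin (n+1)) : ℕ))).const_mul _
  rw [MeasureTheory.integral_finset_sum _
    (fun σ _ => integrable_finset_sum _ (fun τ _ => hint σ τ))]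
  rw [Finset.sum_congr rfl (fun σ _ =>
    MeasureTheory.integral_finset_sum _ (fun τ _ => hint σ τ))]
  set K : ℕ := n + n * (n+1) with hK
  have hvalsum : ∀ (σ τ : Equiv.Perm (Fin (n+1))),
      (∑ j : Fin (n+1), (((σ⁻¹ j : Fin (n+1)) : ℕ) + ((τ⁻¹ j : Fin (n+1)) : ℕ))) = n * (n+1) := by
    intro σ τ
    rw [Finset.sum_add_distrib]
    have h1 : ∀ (π : Equiv.Perm (Fin (n+1))),
        (∑ j : Fin (n+1), ((π j : Fin (n+1)) : ℕ)) = ∑ j : Fin (n+1), (j : ℕ) :=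
      fun π => Equiv.sum_comp π (fun j => (j:ℕ))
    rw [h1 σ⁻¹, h1 τ⁻¹]
    have h2 : (∑ j : Fin (n+1), (j:ℕ)) * 2 = (n+1) * n := by
      rw [Fin.sum_univ_eq_sum_range (fun i => i) (n+1), Finset.sum_range_id_mul_two]
      simp
    rw [Nat.mul_comm (n+1) n] at h2
    omega
  have heval : ∀ (σ τ : Equiv.Perm (Fin (n+1))),
      (∫ l in Sset n ktil,
        ((Equiv.Perm.sign σ : ℤ) : ℝ) * ((Equiv.Perm.sign τ : ℤ) : ℝ)
          * ∏ j, (Fin.snoc l (ktil - ∑ i, l i) : Fin (n + 1) → ℝ) j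
              ^ (((σ⁻¹ j : Fin (n+1)) : ℕ) + ((τ⁻¹ j : Fin (n+1)) : ℕ)))
      = (ktil ^ K / (K.factorial : ℝ)) *
          (((Equiv.Perm.sign σ : ℤ) : ℝ) * ((Equiv.Perm.sign τ : ℤ) : ℝ)
            * ∏ j : Fin (n+1),
              (((((σ⁻¹ j : Fin (n+1)) : ℕ) + ((τ⁻¹ j : Fin (n+1)) : ℕ)).factorial : ℝ))) := by
    intro σ τ
    rw [MeasureTheory.integral_const_mul,
      dirichlet n ktil hk (fun j => ((σ⁻¹ j : Fin (n+1)) : ℕ) + ((τ⁻¹ j : Fin (n+1)) : ℕ)),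
      hvalsum σ τ]
    have hKne : ((K.factorial : ℝ)) ≠ 0 := Nat.cast_ne_zero.mpr K.factorial_ne_zero
    rw [hK]
    field_simp
  rw [Finset.sum_congr rfl (fun σ _ => Finset.sum_congr rfl (fun τ _ => heval σ τ))]
  simp only [← Finset.mul_sum]
  rw [hankel_sum (n+1), gamma_prod (n+1)]
  have hsq : (n+1)^2 = n + n*(n+1) + 1 := by ring
  have hKe : (n+1)^2 - 1 = K := by rw [hK]; omega
  have hKG : Real.Gamma (((n + 1) ^ 2 : ℕ) : ℝ) = (K.factorial : ℝ) := by
    rw [show (((n+1)^2 : ℕ) : ℝ) = ((K : ℕ) : ℝ) + 1 by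
      rw [show (n+1)^2 = K + 1 by rw [hK]; omega]; push_cast; ring]
    exact Real.Gamma_nat_eq_factorial K
  rw [hKe, hKG]
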